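/- For all n ≥ 1, the number of permutations of [n] avoiding both patterns 213 and 2341 equals the Fibonacci number F_{2n−1}, where F_0 = 0, F_1 = 1, and F_n = F_{n−1} + F_{n−2}. -/

import Mathlib

/-- A word `π` contains the pattern `τ` if some subsequence of `π` is
order-isomorphic to `τ`. -/
def containsPat {n k : ℕ} (π : Fin n → Fin n) (τ : Fin k → Fin k) : Prop :=
  ∃ f : Fin k → Fin n, StrictMono f ∧ ∀ i j : Fin k, τ i < τ j ↔ π (f i) < π (f j)

/-- `π` avoids the pattern `τ`. -/
def avoidsPat {n k : ℕ} (π : Fin n → Fin n) (τ : Fin k → Fin k) : Prop :=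
  ¬ containsPat π τ

-- characterization of the two avoidances
theorem avoids213_iff {n : ℕ} (π : Fin n → Fin n) :
    avoidsPat π ![1,0,2] ↔ ∀ a b c : Fin n, a < b → b < c →
      ¬(π b < π a ∧ π a < π c) := by
  constructor
  · intro h a b c hab hbc ⟨h1, h2⟩
    apply h
    refine ⟨![a,b,c], ?_, ?_⟩
    · intro i j hij
      fin_cases i <;> fin_cases j <;> simp_all <;> omega
    · intro i j
      fin_cases i <;> fin_cases j <;>
        simp [Matrix.cons_val_zero, Matrix.cons_val_one] <;> omega
  · rintro h ⟨f, hf, hiso⟩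
    have h01 : f 0 < f 1 := hf (by decide)
    have h12 : f 1 < f 2 := hf (by decide)
    refine h (f 0) (f 1) (f 2) h01 h12 ⟨?_, ?_⟩
    · exact (hiso 1 0).1 (by decide)
    · exact (hiso 0 2).1 (by decide)

theorem avoids2341_iff {n : ℕ} (π : Fin n → Fin n) :
    avoidsPat π ![1,2,3,0] ↔ ∀ a b c d : Fin n, a < b → b < c → c < d →
      ¬(π d < π a ∧ π a < π b ∧ π b < π c) := by
  constructor
  · intro h a b c d hab hbc hcd ⟨h1, h2, h3⟩
    apply h
    refine ⟨![a,b,c,d], ?_, ?_⟩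
    · intro i j hij
      fin_cases i <;> fin_cases j <;> simp_all <;> omega
    · intro i j
      fin_cases i <;> fin_cases j <;>
        simp [Matrix.cons_val_zero, Matrix.cons_val_one] <;> omega
  · rintro h ⟨f, hf, hiso⟩
    have h01 : f 0 < f 1 := hf (by decide)
    have h12 : f 1 < f 2 := hf (by decide)
    have h23 : f 2 < f 3 := hf (by decide)
    refine h (f 0) (f 1) (f 2) (f 3) h01 h12 h23 ⟨?_, ?_, ?_⟩
    · exact (hiso 3 0).1 (by decide)
    · exact (hiso 0 1).1 (by decide)
    · exact (hiso 1 2).1 (by decide)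

open Equiv

def Av {m : ℕ} (σ : Perm (Fin m)) : Prop :=
  (∀ a b c : Fin m, a < b → b < c → ¬(σ b < σ a ∧ σ a < σ c)) ∧
  (∀ a b c d : Fin m, a < b → b < c → c < d → ¬(σ d < σ a ∧ σ a < σ b ∧ σ b < σ c))

def ins {m : ℕ} (p : Fin (m+1)) (σ : Perm (Fin m)) : Perm (Fin (m+1)) :=
  (finSuccEquiv' p).trans ((Equiv.optionCongr σ).trans (finSuccEquiv' (Fin.last m)).symm)

theorem ins_self {m : ℕ} (p : Fin (m+1)) (σ : Perm (Fin m)) : ins p σ p = Fin.last m := by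
  simp [ins, finSuccEquiv'_at]

theorem ins_succAbove {m : ℕ} (p : Fin (m+1)) (σ : Perm (Fin m)) (i : Fin m) :
    ins p σ (p.succAbove i) = (σ i).castSucc := by
  simp [ins, finSuccEquiv'_succAbove, Fin.succAbove_last]

theorem ins_surj {m : ℕ} (π : Perm (Fin (m+1))) : ∃ p σ, π = ins p σ := by
  set p := π.symm (Fin.last m) with hp
  set e := ((finSuccEquiv' p).symm.trans (π.trans (finSuccEquiv' (Fin.last m)))) with he
  have hnone : e none = none := by
    simp [he, finSuccEquiv'_symm_none, hp, finSuccEquiv'_at]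
  refine ⟨p, Equiv.removeNone e, ?_⟩
  have hcongr : Equiv.optionCongr (Equiv.removeNone e) = e := by
    apply Equiv.ext; intro x
    cases x with
    | none => simp [hnone]
    | some x =>
      have h : ∃ x', e (some x) = some x' := by
        cases h2 : e (some x) with
        | none => exact absurd (e.injective (h2.trans hnone.symm)) (by simp)
        | some y => exact ⟨y, rfl⟩
      rw [Equiv.optionCongr_apply, Option.map_some]
      exact Equiv.removeNone_some e h
  ext x
  simp only [ins, hcongr, he]
  simp [hp, finSuccEquiv'_at]

theorem ins_inj {m : ℕ} (p q : Fin (m+1)) (σ τ : Perm (Fin m))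
    (h : ins p σ = ins q τ) : p = q ∧ σ = τ := by
  have hp : ins p σ p = Fin.last m := ins_self p σ
  have hq : ins q τ q = Fin.last m := ins_self q τ
  have hpq : p = q := by
    apply (ins p σ).injective
    rw [hp, h, hq]
  subst hpq
  refine ⟨rfl, ?_⟩
  ext i
  have := ins_succAbove p σ i
  rw [h, ins_succAbove] at this
  exact congrArg Fin.val (Fin.castSucc_injective _ this.symm)

/-- `q` is a valid insertion slot for `σ`. -/
def slotCond {m : ℕ} (σ : Perm (Fin m)) (q : ℕ) : Prop :=
  ∀ i j : Fin m, (i:ℕ) < (j:ℕ) → (j:ℕ) < q →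
    σ i < σ j ∧ ∀ k : Fin m, q ≤ (k:ℕ) → σ i < σ k

theorem sA_cases {m : ℕ} (p : Fin (m+1)) (i : Fin m) :
    ((p.succAbove i : ℕ) = (i:ℕ) ∧ (i:ℕ) < (p:ℕ)) ∨
    ((p.succAbove i : ℕ) = (i:ℕ)+1 ∧ (p:ℕ) ≤ (i:ℕ)) := by
  rcases lt_or_ge ((i:ℕ)) ((p:ℕ)) with h | h
  · left
    rw [Fin.succAbove_of_castSucc_lt _ _ (by simpa [Fin.lt_def] using h)]
    exact ⟨rfl, h⟩
  · right
    rw [Fin.succAbove_of_le_castSucc _ _ (by simpa [Fin.le_def] using h)]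
    exact ⟨rfl, h⟩

theorem sA_ge {m : ℕ} (p : Fin (m+1)) (i : Fin m) : (i:ℕ) ≤ (p.succAbove i : ℕ) := by
  rcases sA_cases p i with ⟨h, _⟩ | ⟨h, _⟩ <;> omega

theorem sA_coe_lt {m : ℕ} {p : Fin (m+1)} {i : Fin m} (h : (i:ℕ) < (p:ℕ)) :
    (p.succAbove i : ℕ) = (i:ℕ) := by
  rcases sA_cases p i with ⟨h', _⟩ | ⟨_, h'⟩ <;> omega

theorem sA_coe_ge {m : ℕ} {p : Fin (m+1)} {i : Fin m} (h : (p:ℕ) ≤ (i:ℕ)) :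
    (p.succAbove i : ℕ) = (i:ℕ)+1 := by
  rcases sA_cases p i with ⟨_, h'⟩ | ⟨h', _⟩ <;> omega

theorem av_ins_iff {m : ℕ} (p : Fin (m+1)) (σ : Perm (Fin m)) :
    Av (ins p σ) ↔ Av σ ∧ slotCond σ (p:ℕ) := by
  constructor
  · rintro ⟨h213, h2341⟩
    refine ⟨⟨?_, ?_⟩, ?_⟩
    · rintro i j k hij hjk ⟨h1, h2⟩
      refine h213 (p.succAbove i) (p.succAbove j) (p.succAbove k)
        (Fin.succAbove_lt_succAbove_iff.2 hij) (Fin.succAbove_lt_succAbove_iff.2 hjk) ?_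
      rw [ins_succAbove, ins_succAbove, ins_succAbove]
      exact ⟨Fin.castSucc_lt_castSucc_iff.2 h1, Fin.castSucc_lt_castSucc_iff.2 h2⟩
    · rintro i j k l hij hjk hkl ⟨h1, h2, h3⟩
      refine h2341 (p.succAbove i) (p.succAbove j) (p.succAbove k) (p.succAbove l)
        (Fin.succAbove_lt_succAbove_iff.2 hij) (Fin.succAbove_lt_succAbove_iff.2 hjk)
        (Fin.succAbove_lt_succAbove_iff.2 hkl) ?_
      rw [ins_succAbove, ins_succAbove, ins_succAbove, ins_succAbove]
      exact ⟨Fin.castSucc_lt_castSucc_iff.2 h1, Fin.castSucc_lt_castSucc_iff.2 h2,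
        Fin.castSucc_lt_castSucc_iff.2 h3⟩
    · intro i j hij hjp
      have hfirst : σ i < σ j := by
        by_contra hn
        have hne : σ j ≠ σ i := fun h => by
          have := σ.injective h; subst this; omega
        have hn' : σ j < σ i := lt_of_le_of_ne (not_lt.1 hn) hne
        refine h213 (p.succAbove i) (p.succAbove j) p
          (Fin.succAbove_lt_succAbove_iff.2 (Fin.lt_def.2 hij))
          (Fin.lt_def.2 (by rw [sA_coe_lt hjp]; exact hjp)) ?_
        rw [ins_succAbove, ins_succAbove, ins_self]
        exact ⟨Fin.castSucc_lt_castSucc_iff.2 hn', Fin.castSucc_lt_last _⟩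
      refine ⟨hfirst, ?_⟩
      intro k hk
      by_contra hn
      have hne : σ k ≠ σ i := fun h => by
        have := σ.injective h; subst this; omega
      have hn' : σ k < σ i := lt_of_le_of_ne (not_lt.1 hn) hne
      refine h2341 (p.succAbove i) (p.succAbove j) p (p.succAbove k)
        (Fin.succAbove_lt_succAbove_iff.2 (Fin.lt_def.2 hij))
        (Fin.lt_def.2 (by rw [sA_coe_lt hjp]; exact hjp))
        (Fin.lt_def.2 (by rw [sA_coe_ge hk]; omega)) ?_
      rw [ins_succAbove, ins_succAbove, ins_succAbove, ins_self]
      exact ⟨Fin.castSucc_lt_castSucc_iff.2 hn', Fin.castSucc_lt_castSucc_iff.2 hfirst,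
        Fin.castSucc_lt_last _⟩
  · rintro ⟨⟨h213, h2341⟩, hslot⟩
    constructor
    · rintro a b c hab hbc ⟨h1, h2⟩
      have ha : a ≠ p := by
        rintro rfl
        rw [ins_self] at h2
        exact (Fin.le_last _).not_gt h2
      have hb : b ≠ p := by
        rintro rfl
        rw [ins_self] at h1
        exact absurd (lt_trans h1 h2) (Fin.le_last _).not_gt
      rcases Fin.exists_succAbove_eq ha with ⟨i, rfl⟩
      rcases Fin.exists_succAbove_eq hb with ⟨j, rfl⟩
      by_cases hc : c = p
      · rw [hc] at hbc
        simp only [ins_succAbove] at h1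
        have hij : (i:ℕ) < (j:ℕ) := by
          have := Fin.succAbove_lt_succAbove_iff.1 hab; omega
        have hjp : (j:ℕ) < (p:ℕ) := by
          have h' := sA_ge p j
          have := Fin.lt_def.1 hbc; omega
        exact absurd (hslot i j hij hjp).1 (not_lt.2 (le_of_lt (Fin.castSucc_lt_castSucc_iff.1 h1)))
      · rcases Fin.exists_succAbove_eq hc with ⟨k, rfl⟩
        simp only [ins_succAbove] at h1 h2
        exact h213 i j k (Fin.succAbove_lt_succAbove_iff.1 hab)
          (Fin.succAbove_lt_succAbove_iff.1 hbc)
          ⟨Fin.castSucc_lt_castSucc_iff.1 h1, Fin.castSucc_lt_castSucc_iff.1 h2⟩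
    · rintro a b c d hab hbc hcd ⟨h1, h2, h3⟩
      have ha : a ≠ p := by
        rintro rfl
        rw [ins_self] at h2
        exact (Fin.le_last _).not_gt h2
      have hb : b ≠ p := by
        rintro rfl
        rw [ins_self] at h3
        exact (Fin.le_last _).not_gt h3
      have hd : d ≠ p := by
        rintro rfl
        rw [ins_self] at h1
        exact absurd (lt_trans (lt_trans h1 h2) h3) (Fin.le_last _).not_gt
      rcases Fin.exists_succAbove_eq ha with ⟨i, rfl⟩
      rcases Fin.exists_succAbove_eq hb with ⟨j, rfl⟩
      rcases Fin.exists_succAbove_eq hd with ⟨l, rfl⟩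
      by_cases hc : c = p
      · rw [hc] at hbc hcd
        simp only [ins_succAbove] at h1 h2
        have hij : (i:ℕ) < (j:ℕ) := by
          have := Fin.succAbove_lt_succAbove_iff.1 hab; omega
        have hjp : (j:ℕ) < (p:ℕ) := by
          have h' := sA_ge p j
          have := Fin.lt_def.1 hbc; omega
        have hlp : (p:ℕ) ≤ (l:ℕ) := by
          rcases sA_cases p l with ⟨h', h''⟩ | ⟨h', h''⟩
          · have := Fin.lt_def.1 hcd; omega
          · exact h''
        exact absurd ((hslot i j hij hjp).2 l hlp)
          (not_lt.2 (le_of_lt (Fin.castSucc_lt_castSucc_iff.1 h1)))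
      · rcases Fin.exists_succAbove_eq hc with ⟨k, rfl⟩
        simp only [ins_succAbove] at h1 h2 h3
        exact h2341 i j k l (Fin.succAbove_lt_succAbove_iff.1 hab)
          (Fin.succAbove_lt_succAbove_iff.1 hbc) (Fin.succAbove_lt_succAbove_iff.1 hcd)
          ⟨Fin.castSucc_lt_castSucc_iff.1 h1, Fin.castSucc_lt_castSucc_iff.1 h2,
           Fin.castSucc_lt_castSucc_iff.1 h3⟩

theorem slotCond_zero {m : ℕ} (σ : Perm (Fin m)) : slotCond σ 0 := by
  intro i j _ h; omega

theorem slotCond_antitone {m : ℕ} (σ : Perm (Fin m)) {q : ℕ} (h : slotCond σ (q+1)) :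
    slotCond σ q := by
  intro i j hij hjq
  obtain ⟨h1, h2⟩ := h i j hij (by omega)
  refine ⟨h1, ?_⟩
  intro k hk
  rcases Nat.lt_or_ge (k:ℕ) (q+1) with hk' | hk'
  · -- (k:ℕ) = q
    have hik : (i:ℕ) < (k:ℕ) := by omega
    exact (h i k hik (by omega)).1
  · exact h2 k hk'

theorem slotCond_le {m : ℕ} (σ : Perm (Fin m)) {q q' : ℕ} (h : slotCond σ q) (hq : q' ≤ q) :
    slotCond σ q' := by
  induction q with
  | zero => have : q' = 0 := by omega
            subst this; exact h
  | succ n ih =>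
    rcases Nat.lt_or_ge q' (n+1) with h' | h'
    · exact ih (slotCond_antitone σ h) (by omega)
    · have : q' = n+1 := by omega
      subst this; exact h

theorem slotCond_ins {m : ℕ} (p : Fin (m+1)) (σ : Perm (Fin m)) (hp : slotCond σ (p:ℕ))
    (q : ℕ) (hq : q ≤ m+1) :
    slotCond (ins p σ) q ↔ (q ≤ (p:ℕ)+1 ∧ slotCond σ q) := by
  constructor
  · intro h
    have hq1 : q ≤ (p:ℕ)+1 := by
      by_contra hn
      push_neg at hn
      have hpm : (p:ℕ)+1 ≤ m := by omega
      have := (h p ⟨(p:ℕ)+1, by omega⟩ (by simp) (by simp; omega)).1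
      rw [ins_self] at this
      exact (Fin.le_last _).not_gt this
    refine ⟨hq1, ?_⟩
    intro i j hij hjq
    have hip : (i:ℕ) < (p:ℕ) := by omega
    by_cases hjp : (j:ℕ) < (p:ℕ)
    · obtain ⟨v1, v2⟩ := h (p.succAbove i) (p.succAbove j)
        (by rw [sA_coe_lt hip, sA_coe_lt hjp]; exact hij)
        (by rw [sA_coe_lt hjp]; exact hjq)
      simp only [ins_succAbove] at v1
      refine ⟨Fin.castSucc_lt_castSucc_iff.1 v1, ?_⟩
      intro k hk
      have := v2 (p.succAbove k) (le_trans hk (sA_ge p k))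
      simp only [ins_succAbove] at this
      exact Fin.castSucc_lt_castSucc_iff.1 this
    · -- j = p as ℕ, q = p+1
      have hjp' : (j:ℕ) = (p:ℕ) := by omega
      have hqp : q = (p:ℕ)+1 := by omega
      obtain ⟨v1, v2⟩ := h (p.succAbove i) p
        (by rw [sA_coe_lt hip]; omega)
        (by omega)
      have hfirst : σ i < σ j := by
        have := v2 (p.succAbove j) (by rw [sA_coe_ge (by omega)]; omega)
        simp only [ins_succAbove] at this
        exact Fin.castSucc_lt_castSucc_iff.1 this
      refine ⟨hfirst, ?_⟩
      intro k hk
      have := v2 (p.succAbove k) (by rw [sA_coe_ge (by omega)]; omega)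
      simp only [ins_succAbove] at this
      exact Fin.castSucc_lt_castSucc_iff.1 this
  · rintro ⟨hq1, hs⟩ x y hxy hyq
    have hyp : (y:ℕ) ≤ (p:ℕ) := by omega
    have hxp : (x:ℕ) < (p:ℕ) := by omega
    have hx : x ≠ p := fun h => by rw [h] at hxp; omega
    rcases Fin.exists_succAbove_eq hx with ⟨i, hi⟩
    have hico : (i:ℕ) = (x:ℕ) ∧ (i:ℕ) < (p:ℕ) := by
      rcases sA_cases p i with ⟨h', h''⟩ | ⟨h', h''⟩ <;> rw [hi] at h' <;> omega
    by_cases hy : y = p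
    · -- q = p+1
      have hqp : q = (p:ℕ)+1 := by rw [hy] at hyq; omega
      constructor
      · rw [hy, ← hi, ins_succAbove, ins_self]
        exact Fin.castSucc_lt_last _
      · intro z hz
        have hzp : z ≠ p := fun h => by rw [h] at hz; omega
        rcases Fin.exists_succAbove_eq hzp with ⟨k, hk⟩
        have hkco : (z:ℕ) = (k:ℕ)+1 ∧ (p:ℕ) ≤ (k:ℕ) := by
          rcases sA_cases p k with ⟨h', h''⟩ | ⟨h', h''⟩ <;> rw [hk] at h' <;> omega
        rw [← hi, ← hk, ins_succAbove, ins_succAbove, Fin.castSucc_lt_castSucc_iff]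
        rcases Nat.lt_or_ge (k:ℕ) q with hkq | hkq
        · -- k = p as ℕ
          exact (hs i k (by omega) (by omega)).1
        · have hpm : (p:ℕ) < m := by
            have := k.isLt; omega
          exact (hs i ⟨(p:ℕ), hpm⟩ (by simp; omega) (by simp; omega)).2 k hkq
    · have hyp' : (y:ℕ) < (p:ℕ) := by
        rcases Nat.lt_or_ge (y:ℕ) (p:ℕ) with h' | h'
        · exact h'
        · exact absurd (Fin.ext (by omega : (y:ℕ) = (p:ℕ))) hy
      rcases Fin.exists_succAbove_eq hy with ⟨j, hj⟩
      have hjco : (j:ℕ) = (y:ℕ) ∧ (j:ℕ) < (p:ℕ) := by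
        rcases sA_cases p j with ⟨h', h''⟩ | ⟨h', h''⟩ <;> rw [hj] at h' <;> omega
      constructor
      · rw [← hi, ← hj, ins_succAbove, ins_succAbove, Fin.castSucc_lt_castSucc_iff]
        exact (hs i j (by omega) (by omega)).1
      · intro z hz
        by_cases hzp : z = p
        · rw [← hi, hzp, ins_succAbove, ins_self]
          exact Fin.castSucc_lt_last _
        · rcases Fin.exists_succAbove_eq hzp with ⟨k, hk⟩
          rw [← hi, ← hk, ins_succAbove, ins_succAbove, Fin.castSucc_lt_castSucc_iff]
          rcases sA_cases p k with ⟨h', h''⟩ | ⟨h', h''⟩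
          · rw [hk] at h'
            exact (hs i j (by omega) (by omega)).2 k (by omega)
          · rw [hk] at h'
            rcases Nat.lt_or_ge (k:ℕ) q with hkq | hkq
            · -- k = p as ℕ but k ≥ p and k ≤ q-1 ≤ p: k = p
              exact (hs i k (by omega) (by omega)).1
            · exact (hs i j (by omega) (by omega)).2 k hkq

instance slotDec {m : ℕ} (σ : Perm (Fin m)) (q : ℕ) : Decidable (slotCond σ q) := by
  unfold slotCond; infer_instance

instance avDec {m : ℕ} (σ : Perm (Fin m)) : Decidable (Av σ) := by
  unfold Av; infer_instance

/-- The label of `σ` : essentially the number of valid insertion slots. -/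
def lab {m : ℕ} (σ : Perm (Fin m)) : ℕ :=
  Nat.find (⟨m+1, Or.inl rfl⟩ : ∃ q, q = m+1 ∨ ¬ slotCond σ q)

theorem lab_le {m : ℕ} (σ : Perm (Fin m)) : lab σ ≤ m+1 :=
  Nat.find_min' _ (Or.inl rfl)

theorem slotCond_of_lt_lab {m : ℕ} {σ : Perm (Fin m)} {q : ℕ} (h : q < lab σ) :
    slotCond σ q := by
  have := Nat.find_min (⟨m+1, Or.inl rfl⟩ : ∃ q, q = m+1 ∨ ¬ slotCond σ q) h
  push_neg at this
  exact this.2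

theorem lt_lab_iff {m : ℕ} {σ : Perm (Fin m)} {q : ℕ} (hq : q ≤ m) :
    q < lab σ ↔ slotCond σ q := by
  refine ⟨fun h => slotCond_of_lt_lab h, fun h => ?_⟩
  by_contra hn
  push_neg at hn
  have hspec : lab σ = m+1 ∨ ¬ slotCond σ (lab σ) :=
    Nat.find_spec (⟨m+1, Or.inl rfl⟩ : ∃ q, q = m+1 ∨ ¬ slotCond σ q)
  rcases hspec with h' | h'
  · omega
  · exact h' (slotCond_le σ h (by omega))

theorem two_le_lab {m : ℕ} (hm : 1 ≤ m) (σ : Perm (Fin m)) : 2 ≤ lab σ := by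
  by_contra hn
  push_neg at hn
  have h0 : slotCond σ 0 := slotCond_zero σ
  have h1 : slotCond σ 1 := by
    intro i j hij hj; omega
  have hspec : lab σ = m+1 ∨ ¬ slotCond σ (lab σ) :=
    Nat.find_spec (⟨m+1, Or.inl rfl⟩ : ∃ q, q = m+1 ∨ ¬ slotCond σ q)
  rcases hspec with h' | h'
  · omega
  · exact h' (slotCond_le σ h1 (by omega))

theorem slotCond_high {m : ℕ} (σ : Perm (Fin m)) {q q' : ℕ} (hq : m ≤ q) (hq' : m ≤ q') :
    slotCond σ q ↔ slotCond σ q' := by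
  have key : ∀ {a b : ℕ}, m ≤ a → m ≤ b → slotCond σ a → slotCond σ b := by
    intro a b ha hb h i j hij hj
    obtain ⟨h1, _⟩ := h i j hij (by have := j.isLt; omega)
    exact ⟨h1, fun k hk => absurd k.isLt (by omega)⟩
  exact ⟨key hq hq', key hq' hq⟩

theorem lab_ins {m : ℕ} (hm : 1 ≤ m) (p : Fin (m+1)) (σ : Perm (Fin m))
    (hp : (p:ℕ) < lab σ) :
    lab (ins p σ) = min ((p:ℕ)+2) (lab σ + if lab σ = m+1 then 1 else 0) := by
  set L := lab σ with hL
  set e : ℕ := if L = m+1 then 1 else 0 with he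
  set T := min ((p:ℕ)+2) (L + e) with hT
  have hL2 : 2 ≤ L := two_le_lab hm σ
  have hLle : L ≤ m+1 := lab_le σ
  have hpm : (p:ℕ) ≤ m := by have := p.isLt; omega
  have hsp : slotCond σ (p:ℕ) := slotCond_of_lt_lab hp
  have hTle : T ≤ m+2 := by omega
  have h1 : T ≤ lab (ins p σ) := by
    have : T - 1 < lab (ins p σ) := by
      rw [lt_lab_iff (by omega)]
      rw [slotCond_ins p σ hsp (T-1) (by omega)]
      refine ⟨by omega, ?_⟩
      by_cases hcase : L = m+1
      · have heq : e = 1 := by simp [he, hcase]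
        have hT' : T = (p:ℕ)+2 := by omega
        rcases Nat.lt_or_ge ((p:ℕ)+1) (m+1) with h' | h'
        · exact slotCond_of_lt_lab (by omega)
        · have hm' : slotCond σ m := slotCond_of_lt_lab (by omega)
          rw [hT', ]
          exact (slotCond_high σ (by omega) (le_refl m)).2 hm'
      · have heq : e = 0 := by simp [he, hcase]
        exact slotCond_of_lt_lab (by omega)
    omega
  have h2 : lab (ins p σ) ≤ T := by
    rcases Nat.lt_or_ge (m+1) T with h | h
    · have := lab_le (ins p σ); omega
    · by_contra hn
      push_neg at hn
      have hcond : slotCond (ins p σ) T := slotCond_of_lt_lab hn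
      rw [slotCond_ins p σ hsp T (by omega)] at hcond
      obtain ⟨hc1, hc2⟩ := hcond
      have hTp : T ≠ (p:ℕ)+2 := by omega
      have hTL : T = L + e := by omega
      have hLm : L ≤ m := by
        by_contra h'
        have hLm1 : L = m+1 := by omega
        have : e = 1 := by simp [he, hLm1]
        omega
      have he0 : e = 0 := by
        have : L ≠ m+1 := by omega
        simp [he, this]
      have hTlt : T < lab σ := (lt_lab_iff (by omega : T ≤ m)).2 hc2
      omega
  omega

open Finset in
/-- number of class permutations of `[m]` with label `j` -/
def NN (m j : ℕ) : ℕ :=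
  ((univ : Finset (Perm (Fin m))).filter (fun σ => Av σ ∧ lab σ = j)).card

/-- target values -/
def ww (m j : ℕ) : ℕ :=
  if j = m+1 then 1 else if 2 ≤ j ∧ j ≤ m then Nat.fib (2*(m+1-j)) else 0

/-- number of valid slots of a label-`l` parent giving a child of label `j` -/
def gg (m l j : ℕ) : ℕ :=
  if l = m+1 then (if 2 ≤ j ∧ j ≤ m+2 then 1 else 0)
  else ((if 2 ≤ j ∧ j < l then 1 else 0) + (if j = l then 2 else 0))

open Finset in
theorem slotcount (m l j : ℕ) (hl2 : 2 ≤ l) (hlm : l ≤ m+1) :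
    ((univ : Finset (Fin (m+1))).filter
      (fun p : Fin (m+1) => (p:ℕ) < l ∧ min ((p:ℕ)+2) (l + if l = m+1 then 1 else 0) = j)).card
      = gg m l j := by
  by_cases hcase : l = m+1
  · subst hcase
    simp only [gg, eq_self_iff_true, if_true]
    by_cases hj : 2 ≤ j ∧ j ≤ m+2
    · rw [if_pos hj]
      have h1 : ((univ : Finset (Fin (m+1))).filter
          (fun p : Fin (m+1) => (p:ℕ) < m+1 ∧ min ((p:ℕ)+2) (m+1+1) = j))
          = {(⟨j-2, by omega⟩ : Fin (m+1))} := by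
        ext p
        simp only [mem_filter, mem_univ, true_and, mem_singleton, Fin.ext_iff]
        have := p.isLt
        omega
      rw [h1, card_singleton]
    · rw [if_neg hj]
      have h1 : ((univ : Finset (Fin (m+1))).filter
          (fun p : Fin (m+1) => (p:ℕ) < m+1 ∧ min ((p:ℕ)+2) (m+1+1) = j))
          = ∅ := by
        ext p
        simp only [mem_filter, mem_univ, true_and, notMem_empty, iff_false, not_and]
        have := p.isLt
        omega
      rw [h1, card_empty]
  · have hlm' : l ≤ m := by omega
    simp only [gg, if_neg hcase, Nat.add_zero]
    by_cases hj : j = l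
    · subst hj
      have h1 : ((univ : Finset (Fin (m+1))).filter
          (fun p : Fin (m+1) => (p:ℕ) < j ∧ min ((p:ℕ)+2) j = j))
          = {(⟨j-2, by omega⟩ : Fin (m+1)), (⟨j-1, by omega⟩ : Fin (m+1))} := by
        ext p
        simp only [mem_filter, mem_univ, true_and, mem_insert, mem_singleton, Fin.ext_iff]
        have := p.isLt
        omega
      rw [h1, card_insert_of_notMem (by simp only [mem_singleton, Fin.ext_iff]; omega),
        card_singleton]
      simp
    · by_cases hj2 : 2 ≤ j ∧ j < l
      · rw [if_pos hj2, if_neg hj]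
        have h1 : ((univ : Finset (Fin (m+1))).filter
            (fun p : Fin (m+1) => (p:ℕ) < l ∧ min ((p:ℕ)+2) l = j))
            = {(⟨j-2, by omega⟩ : Fin (m+1))} := by
          ext p
          simp only [mem_filter, mem_univ, true_and, mem_singleton, Fin.ext_iff]
          have := p.isLt
          omega
        rw [h1, card_singleton]
      · rw [if_neg hj2, if_neg hj]
        have h1 : ((univ : Finset (Fin (m+1))).filter
            (fun p : Fin (m+1) => (p:ℕ) < l ∧ min ((p:ℕ)+2) l = j))
            = ∅ := by
          ext p
          simp only [mem_filter, mem_univ, true_and, notMem_empty, iff_false, not_and]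
          have := p.isLt
          omega
        rw [h1, card_empty]

open Finset in
theorem step (m : ℕ) (hm : 1 ≤ m) (j : ℕ) :
    NN (m+1) j = ∑ l ∈ Finset.range (m+2), NN m l * gg m l j := by
  have hbij : NN (m+1) j = ((univ : Finset (Fin (m+1) × Perm (Fin m))).filter
      (fun x => (Av x.2 ∧ (x.1:ℕ) < lab x.2) ∧
        min ((x.1:ℕ)+2) (lab x.2 + if lab x.2 = m+1 then 1 else 0) = j)).card := by
    rw [NN]
    refine (Finset.card_bij (fun x _ => ins x.1 x.2) ?_ ?_ ?_).symm
    · intro x hx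
      simp only [mem_filter, mem_univ, true_and] at hx ⊢
      obtain ⟨⟨hav, hlt⟩, hmin⟩ := hx
      refine ⟨(av_ins_iff x.1 x.2).2 ⟨hav, slotCond_of_lt_lab hlt⟩, ?_⟩
      rw [lab_ins hm x.1 x.2 hlt]
      exact hmin
    · intro a ha b hb h
      obtain ⟨h1, h2⟩ := ins_inj a.1 b.1 a.2 b.2 h
      exact Prod.ext h1 h2
    · intro π hπ
      simp only [mem_filter, mem_univ, true_and] at hπ
      obtain ⟨hav, hlab⟩ := hπ
      obtain ⟨p, σ, rfl⟩ := ins_surj π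
      obtain ⟨havσ, hslot⟩ := (av_ins_iff p σ).1 hav
      have hlt : (p:ℕ) < lab σ := (lt_lab_iff (by have := p.isLt; omega)).2 hslot
      refine ⟨(p, σ), ?_, rfl⟩
      simp only [mem_filter, mem_univ, true_and]
      refine ⟨⟨havσ, hlt⟩, ?_⟩
      rw [lab_ins hm p σ hlt] at hlab
      exact hlab
  rw [hbij, Finset.card_filter, ← Finset.univ_product_univ, Finset.sum_product_right]
  have hinner : ∀ σ : Perm (Fin m),
      (∑ p : Fin (m+1), if ((Av σ ∧ (p:ℕ) < lab σ) ∧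
        min ((p:ℕ)+2) (lab σ + if lab σ = m+1 then 1 else 0) = j) then 1 else 0)
      = if Av σ then gg m (lab σ) j else 0 := by
    intro σ
    by_cases hav : Av σ
    · rw [if_pos hav, ← slotcount m (lab σ) j (two_le_lab hm σ) (lab_le σ),
        Finset.card_filter]
      apply Finset.sum_congr rfl
      intro p _
      apply if_congr _ rfl rfl
      tauto
    · rw [if_neg hav]
      apply Finset.sum_eq_zero
      intro p _
      rw [if_neg]
      tauto
  calc ∑ σ : Perm (Fin m), ∑ p : Fin (m+1), (if ((Av σ ∧ (p:ℕ) < lab σ) ∧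
        min ((p:ℕ)+2) (lab σ + if lab σ = m+1 then 1 else 0) = j) then 1 else 0)
      = ∑ σ : Perm (Fin m), (if Av σ then gg m (lab σ) j else 0) := by
        exact Finset.sum_congr rfl (fun σ _ => hinner σ)
    _ = ∑ σ ∈ (univ : Finset (Perm (Fin m))).filter Av, gg m (lab σ) j := by
        rw [Finset.sum_filter]
    _ = ∑ l ∈ Finset.range (m+2), ∑ σ ∈ ((univ : Finset (Perm (Fin m))).filter Av).filter
          (fun σ => lab σ = l), gg m (lab σ) j := by
        rw [Finset.sum_fiberwise_of_maps_to]
        intro σ hσ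
        simp only [Finset.mem_range]
        have := lab_le σ
        omega
    _ = ∑ l ∈ Finset.range (m+2), NN m l * gg m l j := by
        apply Finset.sum_congr rfl
        intro l _
        rw [Finset.filter_filter, NN]
        rw [Finset.sum_congr rfl (fun σ hσ => by
          simp only [mem_filter] at hσ
          rw [hσ.2.2])]
        rw [Finset.sum_const, smul_eq_mul]

theorem fibsum (k : ℕ) : (∑ t ∈ Finset.range k, Nat.fib (2*t+2)) + 1 = Nat.fib (2*k+1) := by
  induction k with
  | zero => simp
  | succ k ih =>
    rw [Finset.sum_range_succ]
    have h := Nat.fib_add_two (n := 2*k+1)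
    have e2 : 2*k+1+1 = 2*k+2 := by ring
    have e1 : 2*(k+1)+1 = 2*k+1+2 := by ring
    rw [e1, h, e2]
    omega

open Finset in
theorem warith (m : ℕ) (hm : 1 ≤ m) (j : ℕ) :
    ∑ l ∈ Finset.range (m+2), ww m l * gg m l j = ww (m+1) j := by
  rw [Finset.sum_range_succ]
  have hwtop : ww m (m+1) = 1 := by simp [ww]
  have hgtop : gg m (m+1) j = if 2 ≤ j ∧ j ≤ m+2 then 1 else 0 := by simp [gg]
  rw [hwtop, hgtop, one_mul]
  have hterm : ∀ l ∈ Finset.range (m+1), ww m l * gg m l j =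
      (if 2 ≤ j ∧ j < l then Nat.fib (2*(m+1-l)) else 0) +
      (if l = j then (if 2 ≤ j ∧ j ≤ m then 2 * Nat.fib (2*(m+1-j)) else 0) else 0) := by
    intro l hl
    rw [mem_range] at hl
    have hlne : l ≠ m+1 := by omega
    by_cases hlj : l = j
    · subst hlj
      have h1 : ¬(2 ≤ l ∧ l < l) := by omega
      simp only [ww, gg, if_neg hlne, if_neg h1, eq_self_iff_true, if_true]
      by_cases h2 : 2 ≤ l ∧ l ≤ m
      · rw [if_pos h2, if_pos h2]
        ring
      · rw [if_neg h2, if_neg h2]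
    · rw [if_neg hlj]
      simp only [ww, gg, if_neg hlne, if_neg (fun h => hlj h.symm : ¬ j = l)]
      by_cases h3 : 2 ≤ j ∧ j < l
      · rw [if_pos h3, if_pos h3, if_pos (⟨by omega, by omega⟩ : 2 ≤ l ∧ l ≤ m)]
        ring
      · rw [if_neg h3, if_neg h3]
        ring
  rw [Finset.sum_congr rfl hterm, Finset.sum_add_distrib]
  have hsecond : (∑ l ∈ Finset.range (m+1), if l = j then
      (if 2 ≤ j ∧ j ≤ m then 2 * Nat.fib (2*(m+1-j)) else 0) else 0)
      = if 2 ≤ j ∧ j ≤ m then 2 * Nat.fib (2*(m+1-j)) else 0 := by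
    rw [Finset.sum_ite_eq' (Finset.range (m+1)) j]
    by_cases hj : 2 ≤ j ∧ j ≤ m
    · rw [if_pos (by rw [mem_range]; omega)]
    · rw [if_neg hj]
      split_ifs <;> rfl
  have hfirst : (∑ l ∈ Finset.range (m+1), if 2 ≤ j ∧ j < l then Nat.fib (2*(m+1-l)) else 0)
      = if 2 ≤ j then Nat.fib (2*(m-j)+1) - 1 else 0 := by
    by_cases hj : 2 ≤ j
    · rw [if_pos hj]
      have e1 : ∀ l ∈ Finset.range (m+1), (if 2 ≤ j ∧ j < l then Nat.fib (2*(m+1-l)) else 0)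
          = if j < l then Nat.fib (2*(m+1-l)) else 0 := by
        intro l _
        apply if_congr _ rfl rfl
        constructor
        · tauto
        · intro h; exact ⟨hj, h⟩
      rw [Finset.sum_congr rfl e1, ← Finset.sum_filter]
      have e2 : (Finset.range (m+1)).filter (fun l => j < l) = Finset.Ico (j+1) (m+1) := by
        ext l
        simp only [mem_filter, mem_range, mem_Ico]
        omega
      rw [e2, Finset.sum_Ico_eq_sum_range,
        show m+1-(j+1) = m-j from by omega]
      have e3 : ∀ t ∈ Finset.range (m-j), Nat.fib (2*(m+1-(j+1+t)))
          = Nat.fib (2*((m-j) - 1 - t)+2) := by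
        intro t ht
        rw [mem_range] at ht
        congr 1
        omega
      rw [Finset.sum_congr rfl e3,
        Finset.sum_range_reflect (fun t => Nat.fib (2*t+2)) (m-j)]
      have := fibsum (m-j)
      omega
    · rw [if_neg hj]
      apply Finset.sum_eq_zero
      intro l _
      rw [if_neg (by tauto)]
  rw [hfirst, hsecond]
  -- final case analysis
  by_cases hA : 2 ≤ j ∧ j ≤ m
  · rw [if_pos (by omega : 2 ≤ j), if_pos hA, if_pos (by omega : 2 ≤ j ∧ j ≤ m+2)]
    have hww : ww (m+1) j = Nat.fib (2*((m-j)+2)) := by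
      rw [ww, if_neg (by omega), if_pos (by omega : 2 ≤ j ∧ j ≤ m+1)]
      congr 1
      omega
    rw [hww]
    set k := m - j with hk
    have ha : 2*(m+1-j) = 2*k+2 := by omega
    rw [ha]
    have h1 := Nat.fib_add_two (n := 2*k+1)
    have h2 := Nat.fib_add_two (n := 2*k+2)
    have e1 : 2*k+1+2 = 2*k+3 := by ring
    have e2 : 2*k+2+2 = 2*k+4 := by ring
    have e3 : 2*k+1+1 = 2*k+2 := by ring
    have e4 : 2*k+2+1 = 2*k+3 := by ring
    rw [e1, e3] at h1
    rw [e2, e4] at h2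
    have e5 : 2*(k+2) = 2*k+4 := by ring
    rw [e5]
    have hpos : 0 < Nat.fib (2*k+1) := Nat.fib_pos.2 (by omega)
    omega
  · by_cases hB : j = m+1
    · subst hB
      rw [if_pos (by omega), if_neg hA, if_pos (⟨by omega, by omega⟩ : 2 ≤ m+1 ∧ m+1 ≤ m+2)]
      rw [show m - (m+1) = 0 from by omega]
      have hE : ww (m+1) (m+1) = Nat.fib 2 := by
        rw [ww, if_neg (by omega), if_pos (⟨by omega, by omega⟩ : 2 ≤ m+1 ∧ m+1 ≤ m+1)]
        congr 1
        omega
      rw [hE, Nat.fib_two]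
      have h1 : Nat.fib (2*0+1) = 1 := by norm_num
      omega
    · by_cases hC : j = m+2
      · subst hC
        rw [if_pos (by omega), if_neg hA, if_pos (⟨by omega, by omega⟩ : 2 ≤ m+2 ∧ m+2 ≤ m+2)]
        rw [show m - (m+2) = 0 from by omega]
        have hE : ww (m+1) (m+2) = 1 := by
          rw [ww, if_pos (by omega)]
        rw [hE]
        have h1 : Nat.fib (2*0+1) = 1 := by norm_num
        omega
      · have hD : ¬(2 ≤ j ∧ j ≤ m+2) := by omega
        rw [if_neg hA, if_neg hD]
        have hE : ww (m+1) j = 0 := by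
          rw [ww, if_neg (by omega), if_neg (by omega)]
        rw [hE]
        by_cases hj2 : 2 ≤ j
        · rw [if_pos hj2, show m - j = 0 from by omega]
          have h1 : Nat.fib (2*0+1) = 1 := by norm_num
          omega
        · rw [if_neg hj2]

open Finset in
theorem base (j : ℕ) : NN 1 j = ww 1 j := by
  have hav : ∀ σ : Perm (Fin 1), Av σ := by
    intro σ
    constructor
    · intro a b c hab _ _
      exact absurd (Fin.lt_def.1 hab) (by have := a.isLt; have := b.isLt; omega)
    · intro a b c d hab _ _ _
      exact absurd (Fin.lt_def.1 hab) (by have := a.isLt; have := b.isLt; omega)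
  have hlab : ∀ σ : Perm (Fin 1), lab σ = 2 := by
    intro σ
    have h1 := two_le_lab (le_refl 1) σ
    have h2 := lab_le σ
    omega
  rw [NN, ww]
  by_cases hj : j = 2
  · subst hj
    rw [if_pos rfl]
    have h3 : (univ : Finset (Perm (Fin 1))).filter (fun σ => Av σ ∧ lab σ = 2) = univ := by
      ext σ
      simp [hav σ, hlab σ]
    rw [h3, card_univ]
    simp [Fintype.card_perm]
  · rw [if_neg hj, if_neg (by omega)]
    have h3 : (univ : Finset (Perm (Fin 1))).filter (fun σ => Av σ ∧ lab σ = j) = ∅ := by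
      ext σ
      simp only [mem_filter, mem_univ, true_and, notMem_empty, iff_false, not_and]
      intro _
      rw [hlab σ]
      omega
    rw [h3, card_empty]

theorem NNww : ∀ m, 1 ≤ m → ∀ j, NN m j = ww m j := by
  intro m
  induction m with
  | zero => omega
  | succ m ih =>
    intro _ j
    by_cases hm : m = 0
    · subst hm
      exact base j
    · rw [step m (by omega) j,
        Finset.sum_congr rfl (fun l _ => by rw [ih (by omega) l]),
        warith m (by omega) j]

open Finset in
theorem total (n : ℕ) (hn : 1 ≤ n) :
    ((univ : Finset (Perm (Fin n))).filter Av).card = Nat.fib (2*n - 1) := by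
  have hpart : ((univ : Finset (Perm (Fin n))).filter Av).card
      = ∑ j ∈ Finset.range (n+2), NN n j := by
    rw [Finset.card_eq_sum_card_fiberwise (f := lab) (t := Finset.range (n+2))
      (fun σ _ => by rw [mem_coe, mem_range]; have := lab_le σ; omega)]
    apply Finset.sum_congr rfl
    intro j _
    rw [Finset.filter_filter, NN]
  rw [hpart, Finset.sum_congr rfl (fun j _ => NNww n hn j), Finset.sum_range_succ]
  have htop : ww n (n+1) = 1 := by simp [ww]
  rw [htop]
  have h1 : ∀ j ∈ Finset.range (n+1), ww n j = if 2 ≤ j then Nat.fib (2*(n+1-j)) else 0 := by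
    intro j hj
    rw [mem_range] at hj
    rw [ww, if_neg (by omega)]
    apply if_congr _ rfl rfl
    constructor
    · tauto
    · intro h; exact ⟨h, by omega⟩
  rw [Finset.sum_congr rfl h1, ← Finset.sum_filter]
  have h2 : (Finset.range (n+1)).filter (fun j => 2 ≤ j) = Finset.Ico 2 (n+1) := by
    ext j
    simp only [mem_filter, mem_range, mem_Ico]
    omega
  rw [h2, Finset.sum_Ico_eq_sum_range, show n+1-2 = n-1 from by omega]
  have h3 : ∀ t ∈ Finset.range (n-1), Nat.fib (2*(n+1-(2+t)))
      = Nat.fib (2*((n-1) - 1 - t)+2) := by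
    intro t ht
    rw [mem_range] at ht
    congr 1
    omega
  rw [Finset.sum_congr rfl h3,
    Finset.sum_range_reflect (fun t => Nat.fib (2*t+2)) (n-1)]
  have h4 := fibsum (n-1)
  rw [show 2*(n-1)+1 = 2*n-1 from by omega] at h4
  omega

/-- The number of permutations of [n] avoiding 213 and 2341 (0-indexed: 102 and 1230)
equals the Fibonacci number F_{2n-1}. -/
theorem stmt1 (n : ℕ) (hn : 1 ≤ n) :
    Nat.card {π : Equiv.Perm (Fin n) //
      avoidsPat (⇑π) ![1,0,2] ∧ avoidsPat (⇑π) ![1,2,3,0]} = Nat.fib (2 * n - 1) := by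
  have he : ∀ π : Equiv.Perm (Fin n),
      (avoidsPat (⇑π) ![1,0,2] ∧ avoidsPat (⇑π) ![1,2,3,0]) ↔ Av π := by
    intro π
    exact and_congr (avoids213_iff ⇑π) (avoids2341_iff ⇑π)
  rw [Nat.card_congr (Equiv.subtypeEquivRight he), Nat.card_eq_fintype_card,
    Fintype.card_subtype]
  exact total n hn
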